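/- Let A be a Banach *-algebra with proper involution, and let a ∈ A be a partial isometry (a* = a†, i.e., a = aa*a and a* is a Moore–Penrose inverse of a). Then a has a generalized right core-EP inverse if and only if a is generalized right group invertible. -/

import Mathlib

open Filter Topology

/-- `x` is a generalized right group inverse of `a`. -/
def IsGRGInv {A : Type*} [NormedRing A] [StarRing A] (a x : A) : Prop :=
  a * x ^ 2 = x ∧ star (star a * a ^ 2 * x) = star a * a ^ 2 * x ∧
    Tendsto (fun n : ℕ => ‖a ^ n - a * x * a ^ n‖ ^ (1 / (n : ℝ))) atTop (𝓝 0)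

/-- `x` is a generalized right core-EP inverse of `a`. -/
def IsGRCEPInv {A : Type*} [NormedRing A] [StarRing A] (a x : A) : Prop :=
  a * x ^ 2 = x ∧ star (a * x) = a * x ∧
    Tendsto (fun n : ℕ => ‖a ^ n - a * x * a ^ n‖ ^ (1 / (n : ℝ))) atTop (𝓝 0)

private lemma keyA {A : Type*} [NormedRing A] (r : ℕ → A)
    (hlim : Tendsto (fun n : ℕ => ‖r n‖ ^ (1 / (n : ℝ))) atTop (𝓝 0))
    (c : A) (K : ℝ) (hK : 0 ≤ K)
    (hb : ∀ᶠ n : ℕ in atTop, ‖c‖ ≤ ‖r n‖ * K ^ n) : c = 0 := by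
  have hM : (0:ℝ) < max K 1 := lt_of_lt_of_le one_pos (le_max_right _ _)
  have hε : (0:ℝ) < (2 * max K 1)⁻¹ := by positivity
  have hεM : (2 * max K 1)⁻¹ * max K 1 = 1/2 := by field_simp
  have h1 : ∀ᶠ n : ℕ in atTop, ‖r n‖ ^ (1/(n:ℝ)) < (2 * max K 1)⁻¹ :=
    hlim.eventually (gt_mem_nhds hε)
  have h3 : ∀ᶠ n : ℕ in atTop, ‖c‖ ≤ (1/2:ℝ)^n := by
    filter_upwards [hb, h1, eventually_ge_atTop 1] with n hbn h1n h2n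
    have hn0 : (n:ℝ) ≠ 0 := Nat.cast_ne_zero.mpr (by omega)
    have hr : ‖r n‖ ≤ ((2 * max K 1)⁻¹) ^ n := by
      have h := pow_le_pow_left₀ (Real.rpow_nonneg (norm_nonneg _) _) h1n.le n
      rwa [← Real.rpow_natCast (‖r n‖ ^ (1/(n:ℝ))) n, ← Real.rpow_mul (norm_nonneg _),
        one_div, inv_mul_cancel₀ hn0, Real.rpow_one] at h
    calc ‖c‖ ≤ ‖r n‖ * K^n := hbn
      _ ≤ ((2 * max K 1)⁻¹)^n * (max K 1)^n := by
          apply mul_le_mul hr (pow_le_pow_left₀ hK (le_max_left K 1) n) (by positivity) (by positivity)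
      _ = ((2 * max K 1)⁻¹ * max K 1)^n := (mul_pow _ _ _).symm
      _ = (1/2:ℝ)^n := by rw [hεM]
  have h0 : Tendsto (fun n : ℕ => (1/2:ℝ)^n) atTop (𝓝 0) :=
    tendsto_pow_atTop_nhds_zero_of_lt_one (by norm_num) (by norm_num)
  exact norm_le_zero_iff.mp (ge_of_tendsto h0 h3)

private lemma keyB {A : Type*} [NormedRing A] (r s : ℕ → A) (C : ℝ) (hC : 0 ≤ C)
    (hlim : Tendsto (fun n : ℕ => ‖r n‖ ^ (1 / (n : ℝ))) atTop (𝓝 0))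
    (hb : ∀ n : ℕ, ‖s n‖ ≤ C * ‖r n‖) :
    Tendsto (fun n : ℕ => ‖s n‖ ^ (1 / (n : ℝ))) atTop (𝓝 0) := by
  have hg : Tendsto (fun n : ℕ => max C 1 * ‖r n‖ ^ (1/(n:ℝ))) atTop (𝓝 0) := by
    simpa using hlim.const_mul (max C 1)
  apply squeeze_zero' (Eventually.of_forall fun n => Real.rpow_nonneg (norm_nonneg _) _) ?_ hg
  filter_upwards [eventually_ge_atTop 1] with n hn
  have hn' : (0:ℝ) < n := by exact_mod_cast Nat.lt_of_lt_of_le Nat.zero_lt_one hn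
  have h1 : ‖s n‖ ^ (1/(n:ℝ)) ≤ (C * ‖r n‖) ^ (1/(n:ℝ)) :=
    Real.rpow_le_rpow (norm_nonneg _) (hb n) (by positivity)
  have h2 : (C * ‖r n‖) ^ (1/(n:ℝ)) = C ^ (1/(n:ℝ)) * ‖r n‖ ^ (1/(n:ℝ)) :=
    Real.mul_rpow hC (norm_nonneg _)
  have h3 : C ^ (1/(n:ℝ)) ≤ max C 1 := by
    rcases le_total C 1 with h | h
    · exact le_trans (Real.rpow_le_one hC h (by positivity)) (le_max_right _ _)
    · calc C ^ (1/(n:ℝ)) ≤ C ^ (1:ℝ) :=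
            Real.rpow_le_rpow_of_exponent_le h (by rw [div_le_one hn']; exact_mod_cast hn)
        _ = C := Real.rpow_one C
        _ ≤ max C 1 := le_max_left _ _
  calc ‖s n‖^(1/(n:ℝ)) ≤ C^(1/(n:ℝ)) * ‖r n‖^(1/(n:ℝ)) := h2 ▸ h1
    _ ≤ max C 1 * ‖r n‖^(1/(n:ℝ)) :=
        mul_le_mul_of_nonneg_right h3 (Real.rpow_nonneg (norm_nonneg _) _)

private lemma qprops {A : Type*} [NormedRing A] (a x : A) (hx2 : a * x ^ 2 = x)
    (hlim : Tendsto (fun n : ℕ => ‖a ^ n - a * x * a ^ n‖ ^ (1 / (n : ℝ))) atTop (𝓝 0)) :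
    (∀ n : ℕ, a ^ (n+1) * x ^ (n+1) = a * x) ∧ (a*x) * (a*x) = a*x ∧
      (a*x) * (a*(a*x)) = a*(a*x) := by
  have hqpow : ∀ n : ℕ, a ^ (n+1) * x ^ (n+1) = a * x := by
    intro n; induction n with
    | zero => simp
    | succ m ih =>
      have e1 : x ^ (m+2) = x^2 * x^m := by rw [← pow_add]; ring_nf
      calc a^(m+2) * x^(m+2) = (a^(m+1)*a) * (x^2*x^m) := by rw [e1, pow_succ]
        _ = a^(m+1) * ((a*x^2)*x^m) := by simp only [mul_assoc]
        _ = a^(m+1) * (x * x^m) := by rw [hx2]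
        _ = a^(m+1) * x^(m+1) := by rw [← pow_succ']
        _ = a*x := ih
  have hq2 : (a*x)*(a*x) = a*x := by
    have key : ∀ n : ℕ, a*x - (a*x)*(a*x) = (a^(n+1) - a*x*a^(n+1)) * x^(n+1) := by
      intro n
      calc a*x - (a*x)*(a*x)
          = a^(n+1)*x^(n+1) - (a*x)*(a^(n+1)*x^(n+1)) := by rw [hqpow n]
        _ = (a^(n+1) - a*x*a^(n+1)) * x^(n+1) := by
            rw [sub_mul, mul_assoc (a*x) (a^(n+1)) (x^(n+1))]
    have hz : a*x - (a*x)*(a*x) = 0 := by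
      apply keyA _ hlim _ (1 + ‖x‖) (by positivity)
      filter_upwards [eventually_ge_atTop 1] with n hn
      obtain ⟨m, rfl⟩ : ∃ m, n = m + 1 := ⟨n - 1, by omega⟩
      rw [key m]
      calc ‖(a^(m+1) - a*x*a^(m+1)) * x^(m+1)‖
          ≤ ‖a^(m+1) - a*x*a^(m+1)‖ * ‖x^(m+1)‖ := norm_mul_le _ _
        _ ≤ ‖a^(m+1) - a*x*a^(m+1)‖ * (1+‖x‖)^(m+1) := by
            apply mul_le_mul_of_nonneg_left ?_ (norm_nonneg _)
            exact le_trans (norm_pow_le' x (Nat.succ_pos m))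
              (pow_le_pow_left₀ (norm_nonneg x) (by linarith [norm_nonneg x]) _)
    exact (sub_eq_zero.mp hz).symm
  have hq3 : (a*x)*(a*(a*x)) = a*(a*x) := by
    have key : ∀ n : ℕ, a*(a*x) - (a*x)*(a*(a*x)) = (a^(n+2) - a*x*a^(n+2)) * x^(n+1) := by
      intro n
      have h1 : a*(a*x) = a^(n+2) * x^(n+1) := by
        rw [← hqpow n, ← mul_assoc, ← pow_succ']
      calc a*(a*x) - (a*x)*(a*(a*x))
          = a^(n+2)*x^(n+1) - (a*x)*(a^(n+2)*x^(n+1)) := by rw [h1]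
        _ = (a^(n+2) - a*x*a^(n+2)) * x^(n+1) := by
            rw [sub_mul, mul_assoc (a*x) (a^(n+2)) (x^(n+1))]
    have hz : a*(a*x) - (a*x)*(a*(a*x)) = 0 := by
      apply keyA _ hlim _ (1 + ‖x‖) (by positivity)
      filter_upwards [eventually_ge_atTop 2] with n hn
      obtain ⟨m, rfl⟩ : ∃ m, n = m + 2 := ⟨n - 2, by omega⟩
      rw [key m]
      calc ‖(a^(m+2) - a*x*a^(m+2)) * x^(m+1)‖
          ≤ ‖a^(m+2) - a*x*a^(m+2)‖ * ‖x^(m+1)‖ := norm_mul_le _ _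
        _ ≤ ‖a^(m+2) - a*x*a^(m+2)‖ * (1+‖x‖)^(m+2) := by
            apply mul_le_mul_of_nonneg_left ?_ (norm_nonneg _)
            calc ‖x^(m+1)‖ ≤ ‖x‖^(m+1) := norm_pow_le' x (Nat.succ_pos m)
              _ ≤ (1+‖x‖)^(m+1) := pow_le_pow_left₀ (norm_nonneg x) (by linarith [norm_nonneg x]) _
              _ ≤ (1+‖x‖)^(m+2) := pow_le_pow_right₀ (by linarith [norm_nonneg x]) (by omega)
    exact (sub_eq_zero.mp hz).symm
  exact ⟨hqpow, hq2, hq3⟩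

private lemma fwd {A : Type*} [NormedRing A] [StarRing A] (a x : A)
    (hx2 : a * x ^ 2 = x) (hst : star (a * x) = a * x)
    (hlim : Tendsto (fun n : ℕ => ‖a ^ n - a * x * a ^ n‖ ^ (1 / (n : ℝ))) atTop (𝓝 0)) :
    ∃ y : A, IsGRGInv a y := by
  obtain ⟨hqpow, hq2, hq3⟩ := qprops a x hx2 hlim
  obtain ⟨q, hqdef⟩ : ∃ q : A, q = a * x := ⟨_, rfl⟩
  rw [← hqdef] at hqpow hq2 hq3 hst hlim
  have hqx : q * x = x := by
    rw [hqdef, mul_assoc, ← pow_two]; exact hx2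
  obtain ⟨x₁, hx1def⟩ : ∃ t : A, t = x * q := ⟨_, rfl⟩
  have hax1 : a * x₁ = q := by
    rw [hx1def, ← mul_assoc, ← hqdef]; exact hq2
  have hqx1 : q * x₁ = x₁ := by rw [hx1def, ← mul_assoc, hqx]
  obtain ⟨e, hedef⟩ : ∃ t : A, t = q + x₁*a - x₁*a*q := ⟨_, rfl⟩
  have hqe : q * e = e := by
    rw [hedef]
    calc q*(q + x₁*a - x₁*a*q) = q*q + (q*x₁)*a - ((q*x₁)*a)*q := by noncomm_ring
      _ = q + x₁*a - x₁*a*q := by rw [hq2, hqx1]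
  have hex1 : e * x₁ = x₁ := by
    rw [hedef]
    calc (q + x₁*a - x₁*a*q)*x₁ = q*x₁ + (x₁*a)*x₁ - (x₁*a)*(q*x₁) := by noncomm_ring
      _ = x₁ + (x₁*a)*x₁ - (x₁*a)*x₁ := by rw [hqx1]
      _ = x₁ := by noncomm_ring
  have hay : a * (x₁ * e) = e := by rw [← mul_assoc, hax1, hqe]
  have hae : a * e = q * a := by
    rw [hedef]
    calc a*(q + x₁*a - x₁*a*q) = a*q + (a*x₁)*a - ((a*x₁)*a)*q := by noncomm_ring
      _ = a*q + q*a - (q*a)*q := by rw [hax1]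
      _ = a*q + q*a - q*(a*q) := by rw [mul_assoc]
      _ = a*q + q*a - a*q := by rw [hq3]
      _ = q*a := by noncomm_ring
  refine ⟨x₁ * e, ?_, ?_, ?_⟩
  · calc a*(x₁*e)^2 = (a*(x₁*e))*(x₁*e) := by rw [pow_two, ← mul_assoc]
      _ = e*(x₁*e) := by rw [hay]
      _ = (e*x₁)*e := by rw [← mul_assoc]
      _ = x₁*e := by rw [hex1]
  · have h2 : star a * a^2 * (x₁*e) = star a * (q*a) := by
      rw [mul_assoc]
      congr 1
      calc a^2*(x₁*e) = a*(a*(x₁*e)) := by rw [pow_two, mul_assoc]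
        _ = a*e := by rw [hay]
        _ = q*a := hae
    rw [h2]
    simp only [star_mul, star_star, hst, mul_assoc]
  · apply keyB (fun n => a^n - q*a^n) _ (1 + ‖x₁*a‖) (by positivity) hlim
    intro n
    have hkey : a^n - a*(x₁*e)*a^n = (a^n - q*a^n) - (x₁*a)*(a^n - q*a^n) := by
      calc a^n - a*(x₁*e)*a^n = a^n - e*a^n := by rw [hay]
        _ = (a^n - q*a^n) - (x₁*a)*(a^n - q*a^n) := by
            rw [hedef]
            generalize a^n = B
            noncomm_ring
    rw [hkey]
    calc ‖(a^n - q*a^n) - (x₁*a)*(a^n - q*a^n)‖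
        ≤ ‖a^n - q*a^n‖ + ‖(x₁*a)*(a^n - q*a^n)‖ := norm_sub_le _ _
      _ ≤ ‖a^n - q*a^n‖ + ‖x₁*a‖*‖a^n - q*a^n‖ := by
          linarith [norm_mul_le (x₁*a) (a^n - q*a^n)]
      _ = (1 + ‖x₁*a‖) * ‖a^n - q*a^n‖ := by ring

private lemma bwd {A : Type*} [NormedRing A] [StarRing A] (a x : A)
    (hpi1 : a * star a * a = a) (hpi2 : star a * a * star a = star a)
    (hx2 : a * x ^ 2 = x) (hst : star (star a * a ^ 2 * x) = star a * a ^ 2 * x)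
    (hlim : Tendsto (fun n : ℕ => ‖a ^ n - a * x * a ^ n‖ ^ (1 / (n : ℝ))) atTop (𝓝 0)) :
    ∃ y : A, IsGRCEPInv a y := by
  obtain ⟨hqpow, hq2, hq3⟩ := qprops a x hx2 hlim
  obtain ⟨q, hqdef⟩ : ∃ q : A, q = a * x := ⟨_, rfl⟩
  rw [← hqdef] at hqpow hq2 hq3 hlim
  have hqx : q * x = x := by
    rw [hqdef, mul_assoc, ← pow_two]; exact hx2
  obtain ⟨x₁, hx1def⟩ : ∃ t : A, t = x * q := ⟨_, rfl⟩
  have hax1 : a * x₁ = q := by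
    rw [hx1def, ← mul_assoc, ← hqdef]; exact hq2
  have hqx1 : q * x₁ = x₁ := by rw [hx1def, ← mul_assoc, hqx]
  -- partial isometry facts
  have hap : a * (star a * a) = a := by rw [← mul_assoc]; exact hpi1
  have hpa : (star a * a) * star a = star a := hpi2
  have h0 : star a * a ^ 2 * x = star a * a * q := by rw [hqdef]; noncomm_ring
  rw [h0] at hst
  have hpq : star q * (star a * a) = star a * a * q := by
    have h1 := hst
    rw [star_mul, star_mul, star_star] at h1
    exact h1
  have haaq : a * star a * q = q := by
    rw [hqdef, ← mul_assoc, hpi1]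
  -- v = 0
  have hv0 : star a * q - star q * (star a * q) = 0 := by
    apply keyA (fun n => a^n - q*a^n) hlim _ ((1 + ‖star a * a‖) * (1 + ‖x‖)^2) (by positivity)
    filter_upwards [eventually_ge_atTop 1] with n hn
    have hv : star a * q - star q * (star a * q)
        = (star a * a) * ((a^n - q*a^n) * x^(n+1)) := by
      have h1 : star a * q = (star a * a) * (a^n * x^(n+1)) := by
        rw [← hqpow n, pow_succ']
        simp only [mul_assoc]
      calc star a * q - star q * (star a * q)
          = (star a * a)*(a^n*x^(n+1)) - star q * ((star a * a)*(a^n*x^(n+1))) := by rw [h1]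
        _ = (star a * a)*(a^n*x^(n+1)) - (star q * (star a * a))*(a^n*x^(n+1)) := by
            rw [mul_assoc (star q) (star a * a) (a^n*x^(n+1))]
        _ = (star a * a)*(a^n*x^(n+1)) - ((star a * a) * q)*(a^n*x^(n+1)) := by rw [hpq]
        _ = (star a * a)*((a^n - q*a^n)*x^(n+1)) := by
            rw [sub_mul, mul_assoc q (a^n) (x^(n+1)), mul_sub (star a * a),
              ← mul_assoc (star a * a) q (a^n * x^(n+1))]
    rw [hv]
    have hxp : ‖star a * a‖ * ‖x^(n+1)‖ ≤ ((1 + ‖star a * a‖) * (1 + ‖x‖)^2)^n := by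
      rw [mul_pow]
      have e1 : ‖star a * a‖ ≤ (1 + ‖star a * a‖)^n :=
        le_trans (by linarith [norm_nonneg (star a * a)])
          (le_self_pow₀ (by linarith [norm_nonneg (star a * a)]) (by omega))
      have e2 : ‖x^(n+1)‖ ≤ ((1+‖x‖)^2)^n := by
        rw [← pow_mul]
        calc ‖x^(n+1)‖ ≤ ‖x‖^(n+1) := norm_pow_le' x (Nat.succ_pos n)
          _ ≤ (1+‖x‖)^(n+1) := pow_le_pow_left₀ (norm_nonneg x) (by linarith [norm_nonneg x]) _
          _ ≤ (1+‖x‖)^(2*n) := pow_le_pow_right₀ (by linarith [norm_nonneg x]) (by omega)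
      exact mul_le_mul e1 e2 (norm_nonneg _) (by positivity)
    calc ‖(star a * a) * ((a^n - q*a^n) * x^(n+1))‖
        ≤ ‖star a * a‖ * (‖a^n - q*a^n‖ * ‖x^(n+1)‖) :=
          le_trans (norm_mul_le _ _) (mul_le_mul_of_nonneg_left (norm_mul_le _ _) (norm_nonneg _))
      _ = ‖a^n - q*a^n‖ * (‖star a * a‖ * ‖x^(n+1)‖) := by ring
      _ ≤ ‖a^n - q*a^n‖ * ((1 + ‖star a * a‖) * (1 + ‖x‖)^2)^n :=
          mul_le_mul_of_nonneg_left hxp (norm_nonneg _)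
  -- a * u = 0
  have hau : a * (star a * q - q * (star a * q)) = 0 := by
    have hpu : (star a * a) * (star a * q - q*(star a * q))
        = star a * q - star q * (star a * q) := by
      calc (star a * a) * (star a * q - q*(star a * q))
          = ((star a * a)*star a)*q - (((star a * a)*q)*star a)*q := by noncomm_ring
        _ = star a * q - ((star q * (star a * a))*star a)*q := by rw [hpa, ← hpq]
        _ = star a * q - (star q * ((star a * a)*star a))*q := by
            rw [mul_assoc (star q) (star a * a) (star a)]
        _ = star a * q - (star q * star a)*q := by rw [hpa]
        _ = star a * q - star q * (star a * q) := by rw [mul_assoc (star q) (star a) q]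
    calc a * (star a * q - q * (star a * q))
        = a * ((star a * a) * (star a * q - q * (star a * q))) := by
          rw [← mul_assoc a (star a * a) (star a * q - q * (star a * q)), hap]
      _ = a * (star a * q - star q * (star a * q)) := by rw [hpu]
      _ = 0 := by rw [hv0, mul_zero]
  obtain ⟨E, hEdef⟩ : ∃ t : A, t = a*q*star a := ⟨_, rfl⟩
  have hqE : q * E = E := by
    rw [hEdef, ← mul_assoc q (a*q) (star a)]
    rw [show q*(a*q) = a*q from hq3]
  have hEq : E * q = q := by
    have h1 : E*q = a*(q*(star a * q)) := by rw [hEdef]; noncomm_ring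
    have h2 : a*(q*(star a*q)) = a*(star a * q) - a*(star a * q - q*(star a * q)) := by
      noncomm_ring
    rw [h1, h2, hau, sub_zero, ← mul_assoc]
    exact haaq
  have hE2 : E * E = E := by
    calc E*E = E*(q*E) := by rw [hqE]
      _ = (E*q)*E := by rw [← mul_assoc E q E]
      _ = q*E := by rw [hEq]
      _ = E := hqE
  have hEstar : star E = E := by
    have h1 : star q * star a = (star a * a) * (q * star a) := by
      calc star q * star a = star q * ((star a * a)*star a) := by rw [hpa]
        _ = (star q * (star a * a))*star a := by rw [mul_assoc (star q) (star a * a) (star a)]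
        _ = ((star a * a)*q)*star a := by rw [hpq]
        _ = (star a * a)*(q*star a) := by rw [mul_assoc]
    calc star E = a * (star q * star a) := by
          rw [hEdef]; simp only [star_mul, star_star, mul_assoc]
      _ = a * ((star a * a)*(q*star a)) := by rw [h1]
      _ = (a*(star a * a))*(q*star a) := by rw [mul_assoc a (star a * a) (q*star a)]
      _ = a*(q*star a) := by rw [hap]
      _ = E := by rw [hEdef, ← mul_assoc]
  have hEx1 : E * x₁ = x₁ := by
    calc E*x₁ = E*(q*x₁) := by rw [hqx1]
      _ = (E*q)*x₁ := by rw [← mul_assoc E q x₁]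
      _ = q*x₁ := by rw [hEq]
      _ = x₁ := hqx1
  have hay : a * (x₁ * E) = E := by rw [← mul_assoc, hax1, hqE]
  refine ⟨x₁ * E, ?_, ?_, ?_⟩
  · calc a*(x₁*E)^2 = (a*(x₁*E))*(x₁*E) := by rw [pow_two, ← mul_assoc]
      _ = E*(x₁*E) := by rw [hay]
      _ = (E*x₁)*E := by rw [← mul_assoc E x₁ E]
      _ = x₁*E := by rw [hEx1]
  · rw [hay]; exact hEstar
  · apply keyB (fun n => a^n - q*a^n) _ (1 + ‖E‖) (by positivity) hlim
    intro n
    have hkey : a^n - a*(x₁*E)*a^n = (a^n - q*a^n) - E*(a^n - q*a^n) := by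
      have h2 : E*(q*a^n) = q*a^n := by rw [← mul_assoc E q (a^n), hEq]
      calc a^n - a*(x₁*E)*a^n = a^n - E*a^n := by rw [hay]
        _ = a^n - E*(q*a^n) - E*(a^n - q*a^n) := by
            rw [mul_sub, ← mul_assoc]
            generalize a^n = B
            noncomm_ring
        _ = (a^n - q*a^n) - E*(a^n - q*a^n) := by rw [h2]
    rw [hkey]
    calc ‖(a^n - q*a^n) - E*(a^n - q*a^n)‖
        ≤ ‖a^n - q*a^n‖ + ‖E*(a^n - q*a^n)‖ := norm_sub_le _ _
      _ ≤ ‖a^n - q*a^n‖ + ‖E‖*‖a^n - q*a^n‖ := by linarith [norm_mul_le E (a^n - q*a^n)]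
      _ = (1 + ‖E‖) * ‖a^n - q*a^n‖ := by ring

/-- If `a` is a partial isometry (its Moore–Penrose inverse is `a*`,
i.e. a a* a = a and a* a a* = a*), then `a` has a generalized right core-EP inverse
iff `a` is generalized right group invertible. -/
theorem grcep_iff_grg_partial_isometry
    {A : Type*} [NormedRing A] [StarRing A] [NormedAlgebra ℂ A] [CompleteSpace A]
    (hproper : ∀ x : A, star x * x = 0 → x = 0)
    (a : A) (hpi1 : a * star a * a = a) (hpi2 : star a * a * star a = star a) :
    (∃ x : A, IsGRCEPInv a x) ↔ (∃ x : A, IsGRGInv a x) := by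
  constructor
  · rintro ⟨x, hx2, hst, hlim⟩
    exact fwd a x hx2 hst hlim
  · rintro ⟨x, hx2, hst, hlim⟩
    exact bwd a x hpi1 hpi2 hx2 hst hlim
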